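/- (Posterior on Truth) The P-probability that inf_{t∈ℕ} w(P | x_{<t}) = 0 is zero; that is, with P-probability 1, the posterior weight on the true measure P is bounded away from 0 uniformly in t. -/

import Mathlib

open MeasureTheory Filter
open scoped ENNReal

/-- The cylinder set of infinite sequences agreeing with `x` on the first `t` coordinates,
i.e. the set of sequences beginning with the prefix `x_{<t}`. -/
def cyl {X : Type*} (x : ℕ → X) (t : ℕ) : Set (ℕ → X) := {y | ∀ i < t, y i = x i}

lemma measurableSet_cyl {X : Type*} [MeasurableSpace X] [MeasurableSingletonClass X]
    (x : ℕ → X) (t : ℕ) : MeasurableSet (cyl x t) := by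
  have h : cyl x t = ⋂ i ∈ Finset.range t, (fun y : ℕ → X => y i) ⁻¹' {x i} := by
    ext y; simp [cyl]
  rw [h]
  exact MeasurableSet.biInter (Finset.range t).countable_toSet
    (fun i _ => (measurable_pi_apply i) (measurableSet_singleton _))

lemma cyl_eq_of_mem {X : Type*} {x y : ℕ → X} {t : ℕ} (h : y ∈ cyl x t) {t' : ℕ}
    (ht : t' ≤ t) : cyl y t' = cyl x t' := by
  ext z
  constructor <;> intro hz i hi
  · rw [hz i hi]; exact h i (lt_of_lt_of_le hi ht)
  · rw [hz i hi, h i (lt_of_lt_of_le hi ht)]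

section Key

variable {X : Type*} [Nonempty X] [Finite X] [MeasurableSpace X] [MeasurableSingletonClass X]
  (P ξ : Measure (ℕ → X)) (c : ℝ≥0∞)

/-- `isBad P ξ c x t` : the prefix `x_{<t}` is "bad", i.e. `P(x_{<t}) ≤ c·ξ(x_{<t})`. -/
def isBad (x : ℕ → X) (t : ℕ) : Prop := P (cyl x t) ≤ c * ξ (cyl x t)

/-- Extend a finite string to an infinite sequence. -/
noncomputable def extStr (s : Σ t : ℕ, Fin t → X) : ℕ → X :=
  fun n => if h : n < s.1 then s.2 ⟨n, h⟩ else Classical.arbitrary X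

lemma extStr_lt {s : Σ t : ℕ, Fin t → X} {n : ℕ} (h : n < s.1) :
    extStr s n = s.2 ⟨n, h⟩ := dif_pos h

open Classical in
/-- The cylinder of `s` if `s` is a minimal bad string, else `∅`. -/
noncomputable def Dset (s : Σ t : ℕ, Fin t → X) : Set (ℕ → X) :=
  if (isBad P ξ c (extStr s) s.1 ∧ ∀ t' < s.1, ¬ isBad P ξ c (extStr s) t')
  then cyl (extStr s) s.1 else ∅

lemma mem_Dset {s : Σ t : ℕ, Fin t → X} {y : ℕ → X} (h : y ∈ Dset P ξ c s) :
    (isBad P ξ c (extStr s) s.1 ∧ ∀ t' < s.1, ¬ isBad P ξ c (extStr s) t')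
      ∧ y ∈ cyl (extStr s) s.1 := by
  by_cases hc : isBad P ξ c (extStr s) s.1 ∧ ∀ t' < s.1, ¬ isBad P ξ c (extStr s) t'
  · exact ⟨hc, by rwa [Dset, if_pos hc] at h⟩
  · rw [Dset, if_neg hc] at h; exact absurd h (Set.notMem_empty y)

lemma isBad_congr {x y : ℕ → X} {t t' : ℕ} (hy : y ∈ cyl x t) (ht : t' ≤ t) :
    isBad P ξ c y t' ↔ isBad P ξ c x t' := by
  rw [isBad, isBad, cyl_eq_of_mem hy ht]

lemma key : P {x | ∃ t, isBad P ξ c x t} ≤ c * ξ Set.univ := by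
  classical
  have hsub : {x | ∃ t, isBad P ξ c x t} ⊆ ⋃ s, Dset P ξ c s := by
    intro x hx
    have hfind : isBad P ξ c x (Nat.find hx) := Nat.find_spec hx
    refine Set.mem_iUnion.2 ⟨⟨Nat.find hx, fun i => x i⟩, ?_⟩
    have hxs : x ∈ cyl (extStr (⟨Nat.find hx, fun i => x i⟩ : Σ t : ℕ, Fin t → X))
        (Nat.find hx) := by
      intro i hi
      rw [extStr_lt hi]
    rw [Dset, if_pos]
    · exact hxs
    refine ⟨(isBad_congr P ξ c hxs le_rfl).1 hfind, fun t' ht' => ?_⟩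
    rw [← isBad_congr P ξ c hxs ht'.le]
    exact Nat.find_min hx ht'
  have hDmeas : ∀ s, MeasurableSet (Dset P ξ c s) := by
    intro s
    rw [Dset]
    split
    · exact measurableSet_cyl _ _
    · exact MeasurableSet.empty
  have hdisj : Pairwise (Function.onFun Disjoint (Dset P ξ c)) := by
    have haux : ∀ s s' : Σ t : ℕ, Fin t → X, s.1 ≤ s'.1 →
        ∀ y, y ∈ Dset P ξ c s → y ∈ Dset P ξ c s' → s = s' := by
      intro s s' hle y hy hy'
      obtain ⟨⟨hb1, -⟩, hm1⟩ := mem_Dset P ξ c hy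
      obtain ⟨⟨-, hmin2⟩, hm2⟩ := mem_Dset P ξ c hy'
      have hby : isBad P ξ c y s.1 := (isBad_congr P ξ c hm1 le_rfl).2 hb1
      have ht : s.1 = s'.1 := by
        by_contra hne
        have hlt : s.1 < s'.1 := lt_of_le_of_ne hle hne
        exact hmin2 s.1 hlt ((isBad_congr P ξ c hm2 hle).1 hby)
      refine Sigma.ext ht ((Fin.heq_fun_iff ht).2 fun i => ?_)
      have hi' : (i : ℕ) < s'.1 := ht ▸ i.2
      rw [← extStr_lt i.2, ← hm1 i i.2, hm2 i hi', extStr_lt hi']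
    intro s s' hne
    rw [Function.onFun, Set.disjoint_left]
    intro y hy hy'
    rcases le_total s.1 s'.1 with h | h
    · exact hne (haux s s' h y hy hy')
    · exact hne ((haux s' s h y hy' hy).symm)
  calc P {x | ∃ t, isBad P ξ c x t} ≤ P (⋃ s, Dset P ξ c s) := measure_mono hsub
    _ ≤ ∑' s, P (Dset P ξ c s) := measure_iUnion_le _
    _ ≤ ∑' s, c * ξ (Dset P ξ c s) := by
        refine ENNReal.tsum_le_tsum (fun s => ?_)
        by_cases hc : isBad P ξ c (extStr s) s.1 ∧ ∀ t' < s.1, ¬ isBad P ξ c (extStr s) t'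
        · rw [Dset, if_pos hc]; exact hc.1
        · rw [Dset, if_neg hc]; simp
    _ = c * ∑' s, ξ (Dset P ξ c s) := ENNReal.tsum_mul_left
    _ = c * ξ (⋃ s, Dset P ξ c s) := by rw [measure_iUnion hdisj hDmeas]
    _ ≤ c * ξ Set.univ := mul_le_mul_right (measure_mono (Set.subset_univ _)) _

end Key

/-- `Q(x_{<t})`: the `Q`-measure of the cylinder set of sequences beginning with `x_{<t}`,
as a real number. -/
noncomputable def prefProb {X : Type*} [MeasurableSpace X]
    (Q : Measure (ℕ → X)) (x : ℕ → X) (t : ℕ) : ℝ :=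
  (Q (cyl x t)).toReal

/-- The posterior weight `w(Q i | x_{<t}) = w(Q i)·(Q i)(x_{<t}) / ∑_{j} w(Q j)·(Q j)(x_{<t})`. -/
noncomputable def post {X ι : Type*} [MeasurableSpace X]
    (w : ι → ℝ) (Q : ι → Measure (ℕ → X)) (i : ι) (x : ℕ → X) (t : ℕ) : ℝ :=
  w i * prefProb (Q i) x t / ∑' j, w j * prefProb (Q j) x t

/-- **Posterior on Truth.** The `P`-probability that `inf_t w(P | x_{<t}) = 0` is zero: with
`P`-probability 1, the posterior weight on the true measure `P = Q i₀` is bounded away from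
`0` uniformly in `t`. -/
theorem posterior_on_truth
    {X : Type*} [Fintype X] [Nonempty X] [MeasurableSpace X] [MeasurableSingletonClass X]
    {ι : Type*} [Countable ι]
    (Q : ι → Measure (ℕ → X)) (hQ : ∀ i, IsProbabilityMeasure (Q i))
    (w : ι → ℝ) (hw : ∀ i, 0 < w i) (hw1 : ∑' i, w i = 1)
    (i₀ : ι) :
    (Q i₀) {x | (⨅ t : ℕ, post w Q i₀ x t) = (0 : ℝ)} = 0 := by
  classical
  set ξ : Measure (ℕ → X) := Measure.sum (fun i => (ENNReal.ofReal (w i)) • Q i) with hξdef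
  have hsum : Summable w := by
    by_contra h
    rw [tsum_eq_zero_of_not_summable h] at hw1
    norm_num at hw1
  have hξapp : ∀ s : Set (ℕ → X), MeasurableSet s →
      ξ s = ∑' i, ENNReal.ofReal (w i) * Q i s := by
    intro s hs
    rw [hξdef, Measure.sum_apply _ hs]
    simp [Measure.smul_apply, smul_eq_mul]
  have hξuniv : ξ Set.univ = 1 := by
    rw [hξapp Set.univ MeasurableSet.univ]
    simp only [measure_univ, mul_one]
    rw [← ENNReal.ofReal_tsum_of_nonneg (fun i => (hw i).le) hsum, hw1, ENNReal.ofReal_one]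
  have hξfin : ∀ x t, ξ (cyl x t) ≠ ∞ := by
    intro x t
    exact ne_of_lt (lt_of_le_of_lt (le_trans (measure_mono (Set.subset_univ _))
      hξuniv.le) ENNReal.one_lt_top)
  -- the denominator of `post` equals `(ξ (cyl x t)).toReal`
  have hdenom : ∀ x t, (∑' j, w j * prefProb (Q j) x t) = (ξ (cyl x t)).toReal := by
    intro x t
    rw [hξapp _ (measurableSet_cyl x t), ENNReal.tsum_toReal_eq]
    · refine tsum_congr fun j => ?_
      rw [ENNReal.toReal_mul, ENNReal.toReal_ofReal (hw j).le]
      rfl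
    · intro j
      exact ENNReal.mul_ne_top ENNReal.ofReal_ne_top (measure_ne_top _ _)
  -- ξ dominates w i₀ • Q i₀ on cylinders
  have hdom : ∀ x t, ENNReal.ofReal (w i₀) * Q i₀ (cyl x t) ≤ ξ (cyl x t) := by
    intro x t
    rw [hξapp _ (measurableSet_cyl x t)]
    exact ENNReal.le_tsum i₀
  -- main subset claim
  have hmain : ∀ ε : ℝ, 0 < ε →
      {x : ℕ → X | (⨅ t : ℕ, post w Q i₀ x t) = (0 : ℝ)} ⊆
        {x | ∃ t, Q i₀ (cyl x t) ≤ ENNReal.ofReal (ε / w i₀) * ξ (cyl x t)} := by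
    intro ε hε x hx
    simp only [Set.mem_setOf_eq] at hx ⊢
    -- find t with post < ε
    have hex : ∃ t, post w Q i₀ x t < ε := by
      by_contra h
      push_neg at h
      have : ε ≤ ⨅ t, post w Q i₀ x t := le_ciInf h
      rw [hx] at this
      linarith
    obtain ⟨t, ht⟩ := hex
    refine ⟨t, ?_⟩
    by_cases hz : ξ (cyl x t) = 0
    · have : ENNReal.ofReal (w i₀) * Q i₀ (cyl x t) = 0 := le_antisymm (hz ▸ hdom x t) zero_le
      have hq0 : Q i₀ (cyl x t) = 0 := by
        rcases mul_eq_zero.1 this with h | h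
        · exact absurd h (by simp [ENNReal.ofReal_eq_zero, not_le, hw i₀])
        · exact h
      rw [hq0]
      exact zero_le
    · set p : ℝ := prefProb (Q i₀) x t with hp
      set sξ : ℝ := (ξ (cyl x t)).toReal with hsξ
      have hsξpos : 0 < sξ := ENNReal.toReal_pos hz (hξfin x t)
      have hppos : 0 ≤ p := ENNReal.toReal_nonneg
      have hlt : w i₀ * p / sξ < ε := by
        rw [post, hdenom x t] at ht
        exact ht
      have hple : p ≤ (ε / w i₀) * sξ := by
        rw [div_lt_iff₀ hsξpos] at hlt
        rw [div_mul_eq_mul_div, le_div_iff₀ (hw i₀)]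
        nlinarith [hw i₀]
      calc Q i₀ (cyl x t) = ENNReal.ofReal p := by
            rw [hp, prefProb, ENNReal.ofReal_toReal (measure_ne_top _ _)]
        _ ≤ ENNReal.ofReal ((ε / w i₀) * sξ) := ENNReal.ofReal_le_ofReal hple
        _ = ENNReal.ofReal (ε / w i₀) * ENNReal.ofReal sξ := by
            rw [ENNReal.ofReal_mul (div_nonneg hε.le (hw i₀).le)]
        _ = ENNReal.ofReal (ε / w i₀) * ξ (cyl x t) := by
            rw [hsξ, ENNReal.ofReal_toReal (hξfin x t)]
  -- conclude
  refine le_antisymm ?_ zero_le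
  refine ENNReal.le_of_forall_pos_le_add fun ε hε _ => ?_
  rw [zero_add]
  have hεw : (0:ℝ) < (ε : ℝ) * w i₀ := mul_pos hε (hw i₀)
  calc (Q i₀) {x | (⨅ t : ℕ, post w Q i₀ x t) = (0 : ℝ)}
      ≤ (Q i₀) {x | ∃ t, Q i₀ (cyl x t) ≤ ENNReal.ofReal ((ε * w i₀) / w i₀) * ξ (cyl x t)} :=
        measure_mono (hmain _ hεw)
    _ = (Q i₀) {x | ∃ t, isBad (Q i₀) ξ (ENNReal.ofReal ((ε * w i₀) / w i₀)) x t} := rfl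
    _ ≤ ENNReal.ofReal ((ε * w i₀) / w i₀) * ξ Set.univ := key _ _ _
    _ = (ε : ℝ≥0∞) := by
        rw [hξuniv, mul_one, mul_div_assoc, div_self (ne_of_gt (hw i₀)), mul_one,
          ENNReal.ofReal_coe_nnreal]
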